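/- Let p ≡ 1 (mod 4) be prime and G_p the Paley graph on p vertices. Then the clique number satisfies ω(G_p) ≤ √p. -/

import Mathlib

/-- The Paley graph on `ℤ/pℤ` (for `p ≡ 1 (mod 4)`, where `−1` is a square, the
condition below is equivalent to `i − j` being a nonzero quadratic residue). -/
def paleyGraph (p : ℕ) : SimpleGraph (ZMod p) where
  Adj i j := i ≠ j ∧ IsSquare (i - j) ∧ IsSquare (j - i)
  symm := ⟨fun i j h => ⟨h.1.symm, h.2.2, h.2.1⟩⟩
  loopless := ⟨fun i h => h.1 rfl⟩

lemma nonsquare_mul_square {F : Type*} [Field F] {a b : F} (ha : ¬ IsSquare a)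
    (hb : IsSquare b) (hb0 : b ≠ 0) : ¬ IsSquare (a * b) := by
  rintro ⟨v, hv⟩
  obtain ⟨w, hw⟩ := hb
  have hw0 : w ≠ 0 := by rintro rfl; simp at hw; exact hb0 hw
  refine ha ⟨v / w, ?_⟩
  field_simp
  linear_combination hv - a * hw

/-- The clique number of the Paley graph is at most `√p`. -/
theorem paleyGraph_clique_le_sqrt (p : ℕ) [Fact p.Prime] (hp4 : p % 4 = 1) :
    ∀ (k : ℕ) (s : Finset (ZMod p)), (paleyGraph p).IsNClique k s →
      (k : ℝ) ≤ Real.sqrt p := by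
  intro k s hs
  have hp2 : p ≠ 2 := by omega
  have hchar : ringChar (ZMod p) ≠ 2 := by rw [ZMod.ringChar_zmod_n]; exact hp2
  obtain ⟨l, hl⟩ := FiniteField.exists_nonsquare hchar
  have hl0 : l ≠ 0 := by rintro rfl; exact hl ⟨0, by ring⟩
  set t : Finset (ZMod p) := s.image (fun x => l * x) with ht
  have htcard : t.card = s.card := Finset.card_image_of_injective _ (mul_right_injective₀ hl0)
  -- the difference of two distinct elements of t is a nonsquare
  have hindep : ∀ i ∈ t, ∀ j ∈ t, i ≠ j → ¬ IsSquare (i - j) := by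
    intro i hi j hj hij
    simp only [ht, Finset.mem_image] at hi hj
    obtain ⟨c, hc, rfl⟩ := hi
    obtain ⟨c', hc', rfl⟩ := hj
    have hcc : c ≠ c' := by rintro rfl; exact hij rfl
    have hadj : c ≠ c' ∧ IsSquare (c - c') ∧ IsSquare (c' - c) := hs.1 hc hc' hcc
    have hsq : IsSquare (c - c') := hadj.2.1
    have hne : c - c' ≠ 0 := sub_ne_zero.mpr hcc
    have : l * c - l * c' = l * (c - c') := by ring
    rw [this]
    exact nonsquare_mul_square hl hsq hne
  -- count pairs fiberwise over differences
  have hcount : (s ×ˢ t).card = ∑ b : ZMod p,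
      ((s ×ˢ t).filter (fun q => q.2 - q.1 = b)).card :=
    Finset.card_eq_sum_card_fiberwise (fun x _ => Finset.mem_univ _)
  have hfiber : ∀ b : ZMod p,
      ((s ×ˢ t).filter (fun q => q.2 - q.1 = b)).card ≤ 1 := by
    intro b
    apply Finset.card_le_one.mpr
    rintro ⟨c, i⟩ hq ⟨c', i'⟩ hq'
    simp only [Finset.mem_filter, Finset.mem_product] at hq hq'
    obtain ⟨⟨hc, hi⟩, hbi⟩ := hq
    obtain ⟨⟨hc', hi'⟩, hbi'⟩ := hq'
    by_contra hne
    have hcc : c ≠ c' := by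
      rintro rfl
      exact hne (by rw [Prod.mk.injEq]; exact ⟨rfl, by
        have : i - c = i' - c := hbi.trans hbi'.symm
        linear_combination this⟩)
    have hii : i ≠ i' := by
      intro h
      apply hcc
      have : i - c = i' - c' := hbi.trans hbi'.symm
      rw [h] at this
      linear_combination -this
    have hdiff : i - i' = c - c' := by
      have : i - c = i' - c' := hbi.trans hbi'.symm
      linear_combination this
    have hadj : c ≠ c' ∧ IsSquare (c - c') ∧ IsSquare (c' - c) := hs.1 hc hc' hcc
    exact hindep i hi i' hi' hii (hdiff ▸ hadj.2.1)
  have hk2 : k * k ≤ p := by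
    have h1 : (s ×ˢ t).card = k * k := by
      rw [Finset.card_product, htcard, hs.2]
    have h2 : ∑ b : ZMod p, ((s ×ˢ t).filter (fun q => q.2 - q.1 = b)).card
        ≤ ∑ _b : ZMod p, 1 := Finset.sum_le_sum (fun b _ => hfiber b)
    have h3 : ∑ _b : ZMod p, 1 = p := by simp [ZMod.card]
    calc k * k = (s ×ˢ t).card := h1.symm
      _ = _ := hcount
      _ ≤ ∑ _b : ZMod p, 1 := h2
      _ = p := h3
  have : ((k : ℝ)) * k ≤ (p : ℝ) := by exact_mod_cast hk2
  calc (k : ℝ) = Real.sqrt ((k : ℝ) * k) := (Real.sqrt_mul_self (by positivity)).symm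
    _ ≤ Real.sqrt p := Real.sqrt_le_sqrt this
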